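/- For a finite simplicial graph Γ with a family of groups G, the subgraph Λ ⊆ Γ generated by a set of vertices yields a subgroup ΛG of ΓG that is finite if and only if Λ is a complete graph all of whose vertex groups are finite. -/

import Mathlib

/-- The commutation relators of a graph product: commutators of elements of vertex groups
joined by an edge of `Γ`. -/
def graphProductRels {ι : Type*} (Γ : SimpleGraph ι) (G : ι → Type*) [∀ i, Group (G i)] :
    Set (Monoid.CoprodI G) :=
  {x | ∃ (i j : ι) (g : G i) (h : G j), Γ.Adj i j ∧
    x = Monoid.CoprodI.of g * Monoid.CoprodI.of h *
          (Monoid.CoprodI.of g)⁻¹ * (Monoid.CoprodI.of h)⁻¹}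

/-- The graph product of the groups `G i` over the simplicial graph `Γ`: the quotient of
their free product by the normal closure of the commutation relators. -/
def GraphProduct {ι : Type*} (Γ : SimpleGraph ι) (G : ι → Type*) [∀ i, Group (G i)] :
    Type _ :=
  Monoid.CoprodI G ⧸ Subgroup.normalClosure (graphProductRels Γ G)

instance {ι : Type*} (Γ : SimpleGraph ι) (G : ι → Type*) [∀ i, Group (G i)] :
    Group (GraphProduct Γ G) :=
  inferInstanceAs (Group (Monoid.CoprodI G ⧸ Subgroup.normalClosure (graphProductRels Γ G)))

/-- The canonical morphism from a vertex group into the graph product. -/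
def GraphProduct.of {ι : Type*} {Γ : SimpleGraph ι} {G : ι → Type*} [∀ i, Group (G i)]
    {i : ι} : G i →* GraphProduct Γ G :=
  (QuotientGroup.mk' (Subgroup.normalClosure (graphProductRels Γ G))).comp Monoid.CoprodI.of

section Aux

variable {ι : Type*} {Γ : SimpleGraph ι} {G : ι → Type*} [∀ i, Group (G i)]

open scoped Classical in
/-- The retraction of the graph product onto the free product of the vertex groups of a
subset `T` of vertices spanning no edge. -/
noncomputable def graphProductRetr (Γ : SimpleGraph ι) (G : ι → Type*) [∀ i, Group (G i)]
    (T : Set ι) (hT : ∀ i j, Γ.Adj i j → i ∈ T → j ∈ T → False) :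
    GraphProduct Γ G →* Monoid.CoprodI G :=
  QuotientGroup.lift _ (Monoid.CoprodI.lift fun i => if i ∈ T then Monoid.CoprodI.of else 1)
    (by
      refine Subgroup.normalClosure_le_normal ?_
      rintro x ⟨i, j, g, h, hadj, rfl⟩
      simp only [SetLike.mem_coe, MonoidHom.mem_ker, map_mul, map_inv, Monoid.CoprodI.lift_of]
      by_cases hi : i ∈ T
      · have hj : j ∉ T := fun hj => hT i j hadj hi hj
        simp [hi, hj]
      · simp [hi])

theorem graphProductRetr_of {T : Set ι} {hT : ∀ i j, Γ.Adj i j → i ∈ T → j ∈ T → False}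
    {i : ι} (hi : i ∈ T) (g : G i) :
    graphProductRetr Γ G T hT (GraphProduct.of g) = Monoid.CoprodI.of g := by
  show QuotientGroup.lift _ _ _
      (QuotientGroup.mk (Monoid.CoprodI.of g)) = _
  rw [QuotientGroup.lift_mk', Monoid.CoprodI.lift_of]
  simp [hi]

end Aux

namespace GraphProductAux

variable {ι : Type*} {G : ι → Type*} [∀ i, Group (G i)]

/-- The alternating list `u, v, u, v, …` of length `2 n`. -/
def altList (u v : ι) (g : G u) (h : G v) : ℕ → List (Σ i, G i)
  | 0 => []
  | n + 1 => ⟨u, g⟩ :: ⟨v, h⟩ :: altList u v g h n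

theorem altList_length (u v : ι) (g : G u) (h : G v) :
    ∀ n, (altList u v g h n).length = 2 * n
  | 0 => rfl
  | n + 1 => by
    rw [altList, List.length_cons, List.length_cons, altList_length u v g h n]
    omega

theorem altList_ne_one {u v : ι} {g : G u} {h : G v} (hg : g ≠ 1) (hh : h ≠ 1) :
    ∀ n, ∀ l ∈ altList u v g h n, Sigma.snd l ≠ 1
  | 0 => by simp [altList]
  | n + 1 => by
    intro l hl
    rw [altList, List.mem_cons, List.mem_cons] at hl
    rcases hl with rfl | rfl | hl
    · exact hg
    · exact hh
    · exact altList_ne_one hg hh n l hl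

theorem altList_chain {u v : ι} (huv : u ≠ v) (g : G u) (h : G v) (n : ℕ) :
    (altList u v g h n).Chain' (fun l l' => Sigma.fst l ≠ Sigma.fst l') ∧
      (⟨v, h⟩ :: altList u v g h n : List (Σ i, G i)).Chain'
        (fun l l' => Sigma.fst l ≠ Sigma.fst l') := by
  induction n with
  | zero => simp [altList, List.Chain']
  | succ n ih =>
    have h1 : (altList u v g h (n + 1)).Chain' (fun l l' => Sigma.fst l ≠ Sigma.fst l') := by
      rw [altList, List.Chain', List.isChain_cons_cons]
      exact ⟨huv, ih.2⟩
    refine ⟨h1, ?_⟩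
    rw [altList, List.Chain', List.isChain_cons_cons]
    rw [altList] at h1
    exact ⟨huv.symm, h1⟩

/-- The reduced word `g h g h ⋯ g h` (`n` times). -/
def altWord {u v : ι} (huv : u ≠ v) {g : G u} {h : G v} (hg : g ≠ 1) (hh : h ≠ 1) (n : ℕ) :
    Monoid.CoprodI.Word G :=
  ⟨altList u v g h n, altList_ne_one hg hh n, (altList_chain huv g h n).1⟩

theorem prod_altWord {u v : ι} (huv : u ≠ v) {g : G u} {h : G v} (hg : g ≠ 1) (hh : h ≠ 1) :
    ∀ n, (altWord huv hg hh n).prod = (Monoid.CoprodI.of g * Monoid.CoprodI.of h) ^ n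
  | 0 => by simp [altWord, altList, Monoid.CoprodI.Word.prod]
  | n + 1 => by
    have ih := prod_altWord huv hg hh n
    rw [pow_succ']
    rw [← ih]
    simp [altWord, altList, Monoid.CoprodI.Word.prod, mul_assoc]

theorem word_prod_injective :
    Function.Injective (fun w : Monoid.CoprodI.Word G => w.prod) := by
  classical
  exact (Monoid.CoprodI.Word.equiv (M := G)).symm.injective

theorem pow_of_mul_of_injective {u v : ι} (huv : u ≠ v) {g : G u} {h : G v}
    (hg : g ≠ 1) (hh : h ≠ 1) :
    Function.Injective fun n : ℕ => (Monoid.CoprodI.of g * Monoid.CoprodI.of h) ^ n := by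
  intro a b hab
  have hw : altWord huv hg hh a = altWord huv hg hh b := by
    apply word_prod_injective
    simp only [prod_altWord huv hg hh]
    exact hab
  have := congrArg (fun w : Monoid.CoprodI.Word G => w.toList.length) hw
  simp only [altWord, altList_length] at this
  omega

end GraphProductAux

/-- For a finite simplicial graph `Γ` with nontrivial vertex groups, the subgroup of the
graph product generated by the vertex groups of a full subgraph `Λ` (given by its vertex
set `S`) is finite iff `Λ` is complete and all its vertex groups are finite. -/
theorem graphProduct_subgraph_finite_iff {ι : Type*} [Fintype ι] (Γ : SimpleGraph ι)
    (G : ι → Type*) [∀ i, Group (G i)] (hnt : ∀ i, Nontrivial (G i)) (S : Set ι) :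
    Finite (Subgroup.closure
        (⋃ u ∈ S, Set.range (GraphProduct.of (Γ := Γ) (i := u))) : Subgroup (GraphProduct Γ G)) ↔
      ((∀ u ∈ S, ∀ v ∈ S, u ≠ v → Γ.Adj u v) ∧ ∀ u ∈ S, Finite (G u)) := by
  set C : Subgroup (GraphProduct Γ G) :=
    Subgroup.closure (⋃ u ∈ S, Set.range (GraphProduct.of (Γ := Γ) (i := u))) with hC
  have hmemC : ∀ u ∈ S, ∀ g : G u, (GraphProduct.of (Γ := Γ) g) ∈ C := by
    intro u hu g
    exact Subgroup.subset_closure (Set.mem_biUnion hu ⟨g, rfl⟩)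
  constructor
  · intro hfin
    constructor
    · -- completeness
      intro u hu v hv huv
      by_contra hadj
      have hT : ∀ i j, Γ.Adj i j → i ∈ ({u, v} : Set ι) → j ∈ ({u, v} : Set ι) → False := by
        rintro i j hij (rfl | rfl) (rfl | rfl)
        · exact hij.ne rfl
        · exact hadj hij
        · exact hadj hij.symm
        · exact hij.ne rfl
      set ψ := graphProductRetr Γ G {u, v} hT with hψ
      obtain ⟨g, hg⟩ := exists_ne (1 : G u)
      obtain ⟨h, hh⟩ := exists_ne (1 : G v)
      set c : GraphProduct Γ G := GraphProduct.of g * GraphProduct.of h with hc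
      have hcC : c ∈ C := mul_mem (hmemC u hu g) (hmemC v hv h)
      have hψc : ψ c = Monoid.CoprodI.of g * Monoid.CoprodI.of h := by
        rw [hc, map_mul, graphProductRetr_of (Set.mem_insert u {v}),
          graphProductRetr_of (show v ∈ ({u, v} : Set ι) by simp)]
      have hinj : Function.Injective fun n : ℕ => (⟨c ^ n, pow_mem hcC n⟩ : C) := by
        intro a b hab
        have h1 : c ^ a = c ^ b := by simpa using congrArg Subtype.val hab
        have h2 : (Monoid.CoprodI.of g * Monoid.CoprodI.of h) ^ a
            = (Monoid.CoprodI.of g * Monoid.CoprodI.of h) ^ b := by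
          rw [← hψc, ← map_pow, ← map_pow, h1]
        exact GraphProductAux.pow_of_mul_of_injective huv hg hh h2
      haveI := Finite.of_injective _ hinj
      exact not_finite ℕ
    · -- finiteness of vertex groups
      intro u hu
      have hT : ∀ i j, Γ.Adj i j → i ∈ ({u} : Set ι) → j ∈ ({u} : Set ι) → False := by
        rintro i j hij rfl rfl
        exact hij.ne rfl
      have hinj : Function.Injective (GraphProduct.of (Γ := Γ) (G := G) (i := u)) := by
        intro a b hab
        have h2 : graphProductRetr Γ G {u} hT (GraphProduct.of a)
            = graphProductRetr Γ G {u} hT (GraphProduct.of b) := by rw [hab]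
        rw [graphProductRetr_of (show u ∈ ({u} : Set ι) from rfl),
          graphProductRetr_of (show u ∈ ({u} : Set ι) from rfl)] at h2
        exact Monoid.CoprodI.of_injective u h2
      have : Function.Injective fun x : G u => (⟨GraphProduct.of x, hmemC u hu x⟩ : C) := by
        intro a b hab
        exact hinj (by simpa using congrArg Subtype.val hab)
      exact Finite.of_injective _ this
  · -- backward direction
    rintro ⟨hcomp, hfin⟩
    haveI : Fintype S := (Set.toFinite S).fintype
    haveI : ∀ s : S, Finite (G s) := fun s => hfin s s.2
    set ϕ : ∀ s : S, G s →* GraphProduct Γ G := fun s => GraphProduct.of with hϕ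
    have hcomm : Pairwise fun s t : S => ∀ x y, Commute (ϕ s x) (ϕ t y) := by
      intro s t hst x y
      have hne : (s : ι) ≠ t := fun hh => hst (Subtype.ext hh)
      have hadj : Γ.Adj s t := hcomp s s.2 t t.2 hne
      have hrel : (Monoid.CoprodI.of x * Monoid.CoprodI.of y *
          (Monoid.CoprodI.of x)⁻¹ * (Monoid.CoprodI.of y)⁻¹)
          ∈ Subgroup.normalClosure (graphProductRels Γ G) :=
        Subgroup.subset_normalClosure ⟨s, t, x, y, hadj, rfl⟩
      have h1 : QuotientGroup.mk' (Subgroup.normalClosure (graphProductRels Γ G))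
          (Monoid.CoprodI.of x * Monoid.CoprodI.of y *
            (Monoid.CoprodI.of x)⁻¹ * (Monoid.CoprodI.of y)⁻¹) = 1 :=
        (QuotientGroup.eq_one_iff _).2 hrel
      rw [map_mul, map_mul, map_mul, map_inv, map_inv] at h1
      exact commutatorElement_eq_one_iff_commute.mp (by
        rw [commutatorElement_def]; try exact h1)
    set Φ := MonoidHom.noncommPiCoprod ϕ hcomm with hΦ
    have hrange : Φ.range = C := by
      rw [MonoidHom.noncommPiCoprod_range, hC]
      rw [Set.biUnion_eq_iUnion]
      rw [Subgroup.closure_iUnion]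
      congr 1
      funext s
      rw [← MonoidHom.coe_range, Subgroup.closure_eq]
    rw [← hrange]
    exact Finite.of_surjective Φ.rangeRestrict Φ.rangeRestrict_surjective
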